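/- arXiv:2603.08243 — 6 statements merged into one kernel-verified Lean document; each statement's English description precedes it below -/
import Mathlib

section
/- Let f : ℕ × ℕ → ℝ be decreasing in its second variable, i.e. f(m,n₂) ≤ f(m,n₁) whenever n₁ ≤ n₂, and suppose the series ∑_{m∈ℕ} f(m,0) converges absolutely. For each n define S(n) := (∑_m f(m,0)) − ∑_m (f(m,0) − f(m,n)) ∈ ℝ ∪ {−∞}, where the second sum of nonnegative terms is taken in [0,∞] and r − ∞ := −∞. Then lim_{n→∞} S(n) exists in ℝ ∪ {−∞} and equals ∑_m (lim_{n→∞} f(m,n)) interpreted the same way; equivalently ⨅_n S(n) = (∑_m f(m,0)) − ∑_m ⨆_n (f(m,0) − f(m,n)). The common value is not necessarily finite. -/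
open Filter Topology
open scoped ENNReal NNReal

lemma tsum_iSup_comm_aux (g : ℕ → ℕ → ℝ≥0∞) (hg : ∀ m, Monotone (g m)) :
    ∑' m, ⨆ n, g m n = ⨆ n, ∑' m, g m n := by
  calc ∑' m, ⨆ n, g m n
      = ⨆ s : Finset ℕ, ∑ m ∈ s, ⨆ n, g m n := ENNReal.tsum_eq_iSup_sum
    _ = ⨆ s : Finset ℕ, ⨆ n, ∑ m ∈ s, g m n := by
        refine iSup_congr fun s => ?_
        exact ENNReal.finsetSum_iSup_of_monotone fun m => hg m
    _ = ⨆ n, ⨆ s : Finset ℕ, ∑ m ∈ s, g m n := iSup_comm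
    _ = ⨆ n, ∑' m, g m n := by
        refine iSup_congr fun n => ?_
        exact (ENNReal.tsum_eq_iSup_sum).symm

lemma ereal_sub_continuousAt (c : ℝ) (a : EReal) :
    ContinuousAt (fun x : EReal => (c : EReal) - x) a := by
  have h1 : ContinuousAt (fun p : EReal × EReal => p.1 + p.2) ((c : EReal), -a) :=
    EReal.continuousAt_add (Or.inl (by simp)) (Or.inl (by simp))
  have h2 : ContinuousAt (fun x : EReal => ((c : EReal), -x)) a :=
    (continuous_const.prodMk continuous_neg).continuousAt
  have h3 : Tendsto (fun x : EReal => (c : EReal) + -x) (𝓝 a) (𝓝 ((c : EReal) + -a)) :=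
    h1.tendsto.comp (h2.tendsto)
  simpa [ContinuousAt, sub_eq_add_neg] using h3

lemma ereal_coe_tsum (u : ℕ → ℝ) (hu : Summable u) :
    (∑' m, ((u m : EReal))) = ((∑' m, u m : ℝ) : EReal) := by
  let φ : ℝ →+ EReal := ⟨⟨fun x => (x : EReal), EReal.coe_zero⟩, EReal.coe_add⟩
  exact (hu.hasSum.map φ continuous_coe_real_ereal).tsum_eq

/-- **Interchange of limits lemma.** Let `f : ℕ × ℕ → ℝ` be decreasing in its second
variable, with `∑ m, f (m, 0)` absolutely convergent.  Define
`S n := (∑ m, f (m, 0)) − ∑ m, (f (m, 0) − f (m, n))`, where the second sum of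
nonnegative terms is taken in `[0, ∞]` and subtraction is in `EReal = ℝ ∪ {±∞}`
(so `r − ∞ = −∞`).  Then `S n` tends to its infimum, and this infimum equals
`∑ m, (lim_n f (m, n))` interpreted the same way, namely
`(∑ m, f (m, 0)) − ∑ m, ⨆ n, (f (m, 0) − f (m, n))`. -/
theorem stmt0 (f : ℕ × ℕ → ℝ)
    (hmono : ∀ m n₁ n₂, n₁ ≤ n₂ → f (m, n₂) ≤ f (m, n₁))
    (hsum : Summable fun m => |f (m, 0)|)
    (S : ℕ → EReal)
    (hS : ∀ n, S n = ((∑' m, f (m, 0)) : EReal)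
        - (((∑' m, ENNReal.ofReal (f (m, 0) - f (m, n))) : ℝ≥0∞) : EReal)) :
    Tendsto S atTop (𝓝 (⨅ n, S n)) ∧
      (⨅ n, S n) = ((∑' m, f (m, 0)) : EReal)
        - (((∑' m, ⨆ n, ENNReal.ofReal (f (m, 0) - f (m, n))) : ℝ≥0∞) : EReal) := by
  have hsumreal : Summable fun m => f (m, 0) := hsum.of_abs
  set c : ℝ := ∑' m, f (m, 0) with hc
  have hcE : (∑' m, ((f (m, 0) : EReal))) = (c : EReal) :=
    ereal_coe_tsum _ hsumreal
  set g : ℕ → ℕ → ℝ≥0∞ := fun m n => ENNReal.ofReal (f (m, 0) - f (m, n)) with hg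
  have hgmono : ∀ m, Monotone (g m) := by
    intro m n₁ n₂ h
    exact ENNReal.ofReal_le_ofReal (by linarith [hmono m n₁ n₂ h])
  set T : ℕ → ℝ≥0∞ := fun n => ∑' m, g m n with hT
  have hTmono : Monotone T := fun n₁ n₂ h => ENNReal.tsum_le_tsum fun m => hgmono m h
  have hSanti : Antitone S := by
    intro n₁ n₂ h
    rw [hS n₁, hS n₂, hcE]
    exact EReal.sub_le_sub le_rfl (EReal.coe_ennreal_le_coe_ennreal_iff.2 (hTmono h))
  have htendsto1 : Tendsto S atTop (𝓝 (⨅ n, S n)) := tendsto_atTop_iInf hSanti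
  have hTtend : Tendsto T atTop (𝓝 (⨆ n, T n)) := tendsto_atTop_iSup hTmono
  have hTtend' : Tendsto (fun n => ((T n : ℝ≥0∞) : EReal)) atTop (𝓝 ((⨆ n, T n : ℝ≥0∞) : EReal)) :=
    (continuous_coe_ennreal_ereal.tendsto _).comp hTtend
  have htendsto2 : Tendsto S atTop (𝓝 ((c : EReal) - ((⨆ n, T n : ℝ≥0∞) : EReal))) := by
    have := ((ereal_sub_continuousAt c _).tendsto).comp hTtend'
    refine this.congr fun n => ?_
    rw [hS n, hcE]
    rfl
  have hkey : (⨅ n, S n) = (c : EReal) - ((⨆ n, T n : ℝ≥0∞) : EReal) :=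
    tendsto_nhds_unique htendsto1 htendsto2
  have hswap : ∑' m, ⨆ n, g m n = ⨆ n, T n := tsum_iSup_comm_aux g hgmono
  refine ⟨htendsto1, ?_⟩
  rw [hkey, ← hswap, hcE]
end

section
/- Let Δ and Δ_n (n ∈ ℕ) be nonempty compact convex subsets of Euclidean space ℝ^d, with concave support functions Ψ(x) = inf_{y∈Δ} ⟨y,x⟩ and Ψ_n(x) = inf_{y∈Δ_n} ⟨y,x⟩. Assume Δ has nonempty interior and that sup_{‖x‖≤1} |Ψ_n(x) − Ψ(x)| → 0. Then for every ε > 0 there is n_ε such that for all n ≥ n_ε one has Δ_ε ⊆ Δ_n, where Δ_ε := convexHull{y ∈ Δ : dist(y, frontier Δ) ≥ ε}. -/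
open scoped RealInnerProductSpace Pointwise

/-- The concave support function of a set `A ⊆ ℝ^d` : `Ψ_A(x) = inf_{y ∈ A} ⟨y, x⟫`. -/
noncomputable def suppFun {d : ℕ} (A : Set (EuclideanSpace ℝ (Fin d)))
    (x : EuclideanSpace ℝ (Fin d)) : ℝ :=
  sInf ((fun y => ⟪y, x⟫) '' A)

lemma suppFun_bddBelow {d : ℕ} {A : Set (EuclideanSpace ℝ (Fin d))} (hA : IsCompact A)
    (x : EuclideanSpace ℝ (Fin d)) : BddBelow ((fun y => ⟪y, x⟫) '' A) :=
  (hA.image (continuous_id.inner continuous_const)).bddBelow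

lemma suppFun_le {d : ℕ} {A : Set (EuclideanSpace ℝ (Fin d))} (hA : IsCompact A)
    {z : EuclideanSpace ℝ (Fin d)} (hz : z ∈ A) (x : EuclideanSpace ℝ (Fin d)) :
    suppFun A x ≤ ⟪z, x⟫ :=
  csInf_le (suppFun_bddBelow hA x) ⟨z, hz, rfl⟩

lemma mem_of_suppFun_le {d : ℕ} {A : Set (EuclideanSpace ℝ (Fin d))} (hA : IsCompact A)
    (hAc : Convex ℝ A) (hAne : A.Nonempty) {y : EuclideanSpace ℝ (Fin d)}
    (h : ∀ x : EuclideanSpace ℝ (Fin d), ‖x‖ = 1 → suppFun A x ≤ ⟪y, x⟫) : y ∈ A := by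
  by_contra hy
  obtain ⟨f, u, hfy, hfb⟩ := geometric_hahn_banach_point_closed hAc hA.isClosed hy
  set v := (InnerProductSpace.toDual ℝ (EuclideanSpace ℝ (Fin d))).symm f with hv
  have hvf : ∀ z, ⟪v, z⟫ = f z := by
    intro z
    simp [hv, InnerProductSpace.toDual_symm_apply]
  have hvne : v ≠ 0 := by
    intro h0
    obtain ⟨b, hb⟩ := hAne
    have h1 : f y = 0 := by rw [← hvf, h0]; simp
    have h2 : f b = 0 := by rw [← hvf, h0]; simp
    have := hfb b hb
    rw [h2] at this
    rw [h1] at hfy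
    linarith
  have hvnorm : (0:ℝ) < ‖v‖ := norm_pos_iff.2 hvne
  set x := ‖v‖⁻¹ • v with hx
  have hxnorm : ‖x‖ = 1 := by
    rw [hx, norm_smul, norm_inv, norm_norm, inv_mul_cancel₀ hvnorm.ne']
  have hyx : ⟪y, x⟫ = ‖v‖⁻¹ * f y := by
    rw [hx, real_inner_smul_right, real_inner_comm, hvf]
  have hlow : ‖v‖⁻¹ * u ≤ suppFun A x := by
    apply le_csInf (hAne.image _)
    rintro _ ⟨b, hb, rfl⟩
    show ‖v‖⁻¹ * u ≤ ⟪b, x⟫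
    have : u ≤ f b := (hfb b hb).le
    have hb' : ⟪b, x⟫ = ‖v‖⁻¹ * f b := by
      rw [hx, real_inner_smul_right, real_inner_comm, hvf]
    rw [hb']
    exact mul_le_mul_of_nonneg_left this (by positivity)
  have hup := h x hxnorm
  rw [hyx] at hup
  have hcon : ‖v‖⁻¹ * u ≤ ‖v‖⁻¹ * f y := le_trans hlow hup
  have := (mul_le_mul_iff_right₀ (show (0:ℝ) < ‖v‖⁻¹ by positivity)).1 hcon
  linarith

/-- **Inner approximation under C-norm convergence of support functions.**
If `Δ` has nonempty interior and the support functions of `Δn` converge to that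
of `Δ` uniformly on the closed unit ball, then for every `ε > 0` the convex set
`Δ_ε = convexHull {y ∈ Δ : dist(y, frontier Δ) ≥ ε}` is eventually contained
in `Δn`. -/
theorem stmt3 {d : ℕ} (Δ : Set (EuclideanSpace ℝ (Fin d)))
    (Δn : ℕ → Set (EuclideanSpace ℝ (Fin d)))
    (hΔne : Δ.Nonempty) (hΔc : IsCompact Δ) (hΔconv : Convex ℝ Δ)
    (hΔint : (interior Δ).Nonempty)
    (hne : ∀ n, (Δn n).Nonempty) (hc : ∀ n, IsCompact (Δn n))
    (hconv : ∀ n, Convex ℝ (Δn n))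
    (hunif : ∀ ε > (0 : ℝ), ∃ N, ∀ n ≥ N, ∀ x : EuclideanSpace ℝ (Fin d), ‖x‖ ≤ 1 →
        |suppFun (Δn n) x - suppFun Δ x| ≤ ε) :
    ∀ ε > (0 : ℝ), ∃ N, ∀ n ≥ N,
      convexHull ℝ {y ∈ Δ | ε ≤ Metric.infDist y (frontier Δ)} ⊆ Δn n := by
  intro ε hε
  obtain ⟨N, hN⟩ := hunif (ε/2) (by positivity)
  refine ⟨N, fun n hn => ?_⟩
  apply convexHull_min _ (hconv n)
  rintro y ⟨hyΔ, hyd⟩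
  -- y is far from the frontier: the closed ball of radius ε around y is inside Δ
  have hdisj : ∀ z ∈ Metric.ball y ε, z ∉ frontier Δ := by
    intro z hz hzf
    have := Metric.infDist_le_dist_of_mem (x := y) hzf
    have := lt_of_le_of_lt (le_trans hyd this) (Metric.mem_ball'.1 hz)
    exact lt_irrefl _ this
  have hyint : y ∈ interior Δ := by
    have hynf : y ∉ frontier Δ := by
      intro hyf
      have := Metric.infDist_zero_of_mem hyf
      rw [this] at hyd; linarith
    have : y ∈ closure Δ := subset_closure hyΔ
    rw [closure_eq_interior_union_frontier] at this
    exact this.resolve_right hynf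
  have hball : Metric.ball y ε ⊆ interior Δ := by
    by_contra hsub
    obtain ⟨z, hz, hznotint⟩ := Set.not_subset.1 hsub
    have hpre : IsPreconnected (Metric.ball y ε) := (convex_ball y ε).isPreconnected
    have hcov : Metric.ball y ε ⊆ interior Δ ∪ (closure Δ)ᶜ := by
      intro w hw
      by_cases hwi : w ∈ interior Δ
      · exact Or.inl hwi
      · refine Or.inr ?_
        intro hwc
        rw [closure_eq_interior_union_frontier] at hwc
        exact hdisj w hw (hwc.resolve_left hwi)
    have h1 : (Metric.ball y ε ∩ interior Δ).Nonempty :=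
      ⟨y, Metric.mem_ball_self hε, hyint⟩
    have h2 : (Metric.ball y ε ∩ (closure Δ)ᶜ).Nonempty := by
      refine ⟨z, hz, ?_⟩
      intro hzc
      rw [closure_eq_interior_union_frontier] at hzc
      exact hdisj z hz (hzc.resolve_left hznotint)
    obtain ⟨w, _, hwi, hwc⟩ := hpre (interior Δ) (closure Δ)ᶜ isOpen_interior
      isClosed_closure.isOpen_compl hcov h1 h2
    exact hwc (subset_closure (interior_subset hwi))
  have hcball : Metric.closedBall y ε ⊆ Δ := by
    rw [← closure_ball y hε.ne']
    calc closure (Metric.ball y ε) ⊆ closure (interior Δ) := closure_mono hball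
    _ ⊆ closure Δ := closure_mono interior_subset
    _ = Δ := hΔc.isClosed.closure_eq
  -- membership criterion
  apply mem_of_suppFun_le (hc n) (hconv n) (hne n)
  intro x hx
  have hmem : y - ε • x ∈ Δ := by
    apply hcball
    rw [Metric.mem_closedBall, dist_eq_norm]
    simp [norm_smul, hx, abs_of_pos hε]
  have h1 : suppFun Δ x ≤ ⟪y, x⟫ - ε := by
    have := suppFun_le hΔc hmem x
    rw [inner_sub_left, real_inner_smul_left, real_inner_self_eq_norm_sq, hx] at this
    simpa using this
  have h2 := hN n hn x (le_of_eq hx)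
  have h3 : suppFun (Δn n) x ≤ suppFun Δ x + ε/2 := by
    have := abs_le.1 h2
    linarith [this.2]
  linarith
end

section
/- Let I be a type, δ : I → ℝ with 0 < δ_i ≤ 1 for all i, C ≥ 0 a real number, R ⊆ I a finite subset, Y a nonempty type, and θ : I → Y → ℝ a family of functions such that: θ_i(y) ≤ 0 for all i ∉ R and all y; θ_i(y) ≤ C for all i ∈ R and all y; and for every y the family (δ_i·θ_i(y))_{i∈I} is summable with ∑_{i∈I} δ_i·θ_i(y) ≥ 0. Then for every i ∈ I and every y ∈ Y one has |θ_i(y)| ≤ C·|R| / δ_i. -/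
/-- **Uniform boundedness of the members of a weighted family with nonnegative sums.**
If `0 < δ i ≤ 1`, each `θ i` is `≤ 0` outside a finite index set `R` and `≤ C`
on `R`, and at every point the weighted family `(δ i * θ i y)` is summable with
nonnegative sum, then `|θ i y| ≤ C * |R| / δ i` for every `i` and `y`. -/
theorem stmt6 {I : Type*} (δ : I → ℝ) (hδ : ∀ i, 0 < δ i ∧ δ i ≤ 1)
    (C : ℝ) (hC : 0 ≤ C) (R : Finset I) {Y : Type*} [Nonempty Y]
    (θ : I → Y → ℝ)
    (houtside : ∀ i ∉ R, ∀ y : Y, θ i y ≤ 0)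
    (hbound : ∀ i ∈ R, ∀ y : Y, θ i y ≤ C)
    (hsum : ∀ y : Y, Summable (fun i => δ i * θ i y) ∧ 0 ≤ ∑' i, δ i * θ i y) :
    ∀ (i : I) (y : Y), |θ i y| ≤ C * R.card / δ i := by
  intro i y
  classical
  obtain ⟨hδpos, hδle⟩ := hδ i
  obtain ⟨hs, hnn⟩ := hsum y
  set f : I → ℝ := fun j => δ j * θ j y with hf
  have hfC : ∀ j ∈ R, f j ≤ C := by
    intro j hj
    rcases le_or_gt (θ j y) 0 with h | h
    · exact le_trans (mul_nonpos_of_nonneg_of_nonpos (hδ j).1.le h) hC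
    · calc f j ≤ 1 * θ j y := by
            exact mul_le_mul_of_nonneg_right (hδ j).2 h.le
        _ = θ j y := one_mul _
        _ ≤ C := hbound j hj y
  have hfout : ∀ j ∉ R, f j ≤ 0 := fun j hj =>
    mul_nonpos_of_nonneg_of_nonpos (hδ j).1.le (houtside j hj y)
  have hRHSnn : 0 ≤ C * R.card / δ i :=
    div_nonneg (mul_nonneg hC (Nat.cast_nonneg _)) hδpos.le
  -- lower bound via the sum
  set s : Finset I := insert i R with hsdef
  have hsplit := Summable.sum_add_tsum_compl (s := s) hs
  have htail : ∑' (j : ((s : Set I)ᶜ : Set I)), f j ≤ 0 := by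
    apply tsum_nonpos
    intro j
    apply hfout
    intro hjR
    exact j.2 (by simp [hsdef, hjR])
  have hssum : 0 ≤ ∑ j ∈ s, f j := by
    have : 0 ≤ ∑ j ∈ s, f j + ∑' (j : ((s : Set I)ᶜ : Set I)), f j := by
      rw [hsplit]; exact hnn
    linarith
  have herase : ∑ j ∈ s.erase i, f j ≤ C * R.card := by
    have hsub : s.erase i ⊆ R := by
      intro j hj
      rcases Finset.mem_erase.mp hj with ⟨hne, hjs⟩
      rcases Finset.mem_insert.mp hjs with h | h
      · exact absurd h hne
      · exact h
    calc ∑ j ∈ s.erase i, f j ≤ ∑ _j ∈ s.erase i, C :=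
          Finset.sum_le_sum (fun j hj => hfC j (hsub hj))
      _ = (s.erase i).card * C := by rw [Finset.sum_const, nsmul_eq_mul]
      _ ≤ R.card * C := by
          apply mul_le_mul_of_nonneg_right _ hC
          exact_mod_cast Finset.card_le_card hsub
      _ = C * R.card := mul_comm _ _
  have hfi : -(C * R.card) ≤ f i := by
    have : ∑ j ∈ s, f j = f i + ∑ j ∈ s.erase i, f j := by
      rw [Finset.add_sum_erase _ _ (Finset.mem_insert_self i R)]
    nlinarith [hssum, herase]
  have hlow : -(C * R.card / δ i) ≤ θ i y := by
    have h1 : -(C * R.card) ≤ δ i * θ i y := hfi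
    rw [neg_le, le_div_iff₀ hδpos]
    nlinarith
  -- upper bound
  have hupp : θ i y ≤ C * R.card / δ i := by
    by_cases hi : i ∈ R
    · have h1 : (1 : ℝ) ≤ R.card := by
        exact_mod_cast Finset.card_pos.mpr ⟨i, hi⟩
      calc θ i y ≤ C := hbound i hi y
        _ = C * 1 / 1 := by ring
        _ ≤ C * R.card / δ i := by
            apply div_le_div₀ (mul_nonneg hC (Nat.cast_nonneg _))
              (by nlinarith) hδpos hδle
    · exact le_trans (houtside i hi y) hRHSnn
  exact abs_le.mpr ⟨hlow, hupp⟩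
end

section
/- Define θ : ℕ → ℝ → ℝ by θ(0)(y) = 1 and θ(n)(y) = min(y − 2^{−n}, 0) for n ≥ 1. Then for every y ∈ [0,1] the series ∑_{n=0}^∞ θ(n)(y) converges absolutely to a value F(y); F(0) = 0; for every n ∈ ℕ and every y with 2^{−(n+1)} ≤ y ≤ 2^{−n} one has F(y) = n·y + 2^{−n}; and F(y) ≥ 0 for all y ∈ [0,1]. -/
lemma hpow' (n : ℕ) : (2 : ℝ) ^ (-(n : ℤ)) = (2⁻¹ : ℝ) ^ n := by
  rw [zpow_neg, zpow_natCast, inv_pow]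

lemma hsum' (n : ℕ) : ∑ k ∈ Finset.range n, (2⁻¹ : ℝ) ^ (k + 1) = 1 - 2⁻¹ ^ n := by
  induction n with
  | zero => simp
  | succ n ih => rw [Finset.sum_range_succ, ih, pow_succ]; ring

/-- **The global roof function of the first example of Section 6.**
With `θ 0 y = 1` and `θ n y = min (y − 2^{−n}) 0` for `n ≥ 1`: the series
`∑ n, θ n y` converges absolutely for every `y ∈ [0, 1]`; its sum `F` satisfies
`F 0 = 0`, `F y = n y + 2^{−n}` for `2^{−(n+1)} ≤ y ≤ 2^{−n}`, and `F ≥ 0` on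
`[0, 1]`. -/
theorem stmt11 (θ : ℕ → ℝ → ℝ) (h0 : ∀ y : ℝ, θ 0 y = 1)
    (hn : ∀ n : ℕ, n ≠ 0 → ∀ y : ℝ, θ n y = min (y - (2 : ℝ) ^ (-(n : ℤ))) 0) :
    (∀ y ∈ Set.Icc (0 : ℝ) 1, Summable fun n => |θ n y|) ∧
      (∑' n, θ n 0) = 0 ∧
      (∀ n : ℕ, ∀ y : ℝ, (2 : ℝ) ^ (-(n : ℤ) - 1) ≤ y → y ≤ (2 : ℝ) ^ (-(n : ℤ)) →
        (∑' k, θ k y) = n * y + (2 : ℝ) ^ (-(n : ℤ))) ∧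
      (∀ y ∈ Set.Icc (0 : ℝ) 1, 0 ≤ ∑' n, θ n y) := by
  -- summability
  have hsummable : ∀ y ∈ Set.Icc (0 : ℝ) 1, Summable fun n => |θ n y| := by
    intro y hy
    have hgeom : Summable fun n : ℕ => (2⁻¹ : ℝ) ^ n :=
      summable_geometric_of_lt_one (by norm_num) (by norm_num)
    refine Summable.of_nonneg_of_le (fun n => abs_nonneg _) (fun n => ?_) hgeom
    rcases Nat.eq_zero_or_pos n with rfl | hn0
    · simp [h0 y]
    · rw [hn n hn0.ne' y, hpow' n]
      have hc : (0:ℝ) < 2⁻¹ ^ n := by positivity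
      have h1 : min (y - 2⁻¹ ^ n) 0 ≤ 2⁻¹ ^ n := le_trans (min_le_right _ _) hc.le
      have h2 : -(2⁻¹:ℝ) ^ n ≤ min (y - 2⁻¹ ^ n) 0 :=
        le_min (by linarith [hy.1]) (by linarith)
      exact abs_le.2 ⟨h2, h1⟩
  -- the main formula
  have hmain : ∀ n : ℕ, ∀ y : ℝ, (2 : ℝ) ^ (-(n : ℤ) - 1) ≤ y → y ≤ (2 : ℝ) ^ (-(n : ℤ)) →
      (∑' k, θ k y) = n * y + (2 : ℝ) ^ (-(n : ℤ)) := by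
    intro n y hy1 hy2
    have hy1' : (2⁻¹ : ℝ) ^ (n + 1) ≤ y := by
      have : (-(n : ℤ) - 1) = -((n + 1 : ℕ) : ℤ) := by push_cast; ring
      rwa [this, hpow'] at hy1
    have hy2' : y ≤ (2⁻¹ : ℝ) ^ n := by rwa [hpow'] at hy2
    have hzero : ∀ k ∉ Finset.range (n + 1), θ k y = 0 := by
      intro k hk
      rw [Finset.mem_range, not_lt] at hk
      have hk0 : k ≠ 0 := by omega
      rw [hn k hk0 y, hpow']
      have : (2⁻¹ : ℝ) ^ k ≤ 2⁻¹ ^ (n + 1) :=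
        pow_le_pow_of_le_one (by norm_num) (by norm_num) hk
      exact min_eq_right (by linarith)
    rw [tsum_eq_sum hzero, Finset.sum_range_succ' _ n, h0 y]
    have hval : ∀ k ∈ Finset.range n, θ (k + 1) y = y - 2⁻¹ ^ (k + 1) := by
      intro k hk
      rw [Finset.mem_range] at hk
      rw [hn (k + 1) (Nat.succ_ne_zero k) y, hpow']
      have : (2⁻¹ : ℝ) ^ n ≤ 2⁻¹ ^ (k + 1) :=
        pow_le_pow_of_le_one (by norm_num) (by norm_num) (by omega)
      exact min_eq_left (by linarith)
    rw [Finset.sum_congr rfl hval, Finset.sum_sub_distrib, Finset.sum_const,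
      Finset.card_range, hsum' n, hpow', nsmul_eq_mul]
    ring
  have hF0 : (∑' n, θ n 0) = 0 := by
    have hS : Summable fun n => θ n 0 :=
      (hsummable 0 ⟨le_refl 0, by norm_num⟩).of_abs
    rw [Summable.tsum_eq_zero_add hS, h0 0]
    have hval : ∀ n : ℕ, θ (n + 1) 0 = -((2⁻¹ : ℝ) ^ (n + 1)) := by
      intro n
      rw [hn (n + 1) (Nat.succ_ne_zero n) 0, hpow']
      have hc : (0:ℝ) < 2⁻¹ ^ (n + 1) := by positivity
      rw [zero_sub]
      exact min_eq_left (by linarith)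
    have : ∑' n : ℕ, θ (n + 1) 0 = -1 := by
      rw [tsum_congr hval, tsum_neg]
      have : ∑' n : ℕ, (2⁻¹ : ℝ) ^ (n + 1) = 1 := by
        have hg : ∑' n : ℕ, (2⁻¹ : ℝ) ^ n = 2 := by
          rw [tsum_geometric_of_lt_one (by norm_num) (by norm_num)]; norm_num
        calc ∑' n : ℕ, (2⁻¹ : ℝ) ^ (n + 1)
            = ∑' n : ℕ, 2⁻¹ * (2⁻¹ : ℝ) ^ n := by
              refine tsum_congr fun n => ?_; rw [pow_succ]; ring
          _ = 2⁻¹ * ∑' n : ℕ, (2⁻¹ : ℝ) ^ n := tsum_mul_left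
          _ = 1 := by rw [hg]; norm_num
      rw [this]
    rw [this]; ring
  refine ⟨hsummable, hF0, hmain, ?_⟩
  · -- nonnegativity
    intro y hy
    rcases eq_or_lt_of_le hy.1 with rfl | hy0
    · exact hF0.ge
    · obtain ⟨m, hm⟩ := exists_pow_lt_of_lt_one hy0 (by norm_num : (2⁻¹:ℝ) < 1)
      have hex : ∃ m, (2⁻¹ : ℝ) ^ m < y := ⟨m, hm⟩
      have hMlt : (2⁻¹ : ℝ) ^ (Nat.find hex) < y := Nat.find_spec hex
      have hM0 : Nat.find hex ≠ 0 := by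
        intro h
        rw [h] at hMlt
        simp at hMlt
        linarith [hy.2]
      obtain ⟨n, hMn⟩ : ∃ n, Nat.find hex = n + 1 := ⟨Nat.find hex - 1, by omega⟩
      rw [hMn] at hMlt
      have hle : y ≤ (2⁻¹ : ℝ) ^ n := le_of_not_gt (Nat.find_min hex (by omega))
      have h1 : (2 : ℝ) ^ (-(n : ℤ) - 1) ≤ y := by
        have : (-(n : ℤ) - 1) = -((n + 1 : ℕ) : ℤ) := by push_cast; ring
        rw [this, hpow']
        exact hMlt.le
      have h2 : y ≤ (2 : ℝ) ^ (-(n : ℤ)) := by rw [hpow']; exact hle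
      rw [hmain n y h1 h2]
      have : (0:ℝ) < (2:ℝ) ^ (-(n:ℤ)) := by positivity
      have hny : (0:ℝ) ≤ n * y := by positivity
      linarith
end

section
/- With θ : ℕ → ℝ → ℝ given by θ(0)(y) = 1 and θ(n)(y) = min(y − 2^{−n}, 0) for n ≥ 1, the series of integrals ∑_{n=0}^∞ ∫_0^1 θ(n)(y) dy converges and 2·∑_{n=0}^∞ ∫_0^1 θ(n)(y) dy = 5/3. In particular, ∫_0^1 θ(n)(y) dy = −2^{−2n−1} for every n ≥ 1. -/
open MeasureTheory

lemma min_integral (c : ℝ) (hc0 : 0 ≤ c) (hc1 : c ≤ 1) :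
    (∫ y in (0 : ℝ)..1, min (y - c) 0) = -(c ^ 2 / 2) := by
  have hcont : Continuous fun y : ℝ => min (y - c) 0 :=
    (continuous_id.sub continuous_const).min continuous_const
  have hsplit := intervalIntegral.integral_add_adjacent_intervals
    (hcont.intervalIntegrable (μ := volume) 0 c) (hcont.intervalIntegrable (μ := volume) c 1)
  have h1 : (∫ y in (0 : ℝ)..c, min (y - c) 0) = ∫ y in (0 : ℝ)..c, (y - c) := by
    apply intervalIntegral.integral_congr
    intro y hy
    rw [Set.uIcc_of_le hc0] at hy
    exact min_eq_left (sub_nonpos.2 hy.2)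
  have h2 : (∫ y in (c : ℝ)..1, min (y - c) 0) = 0 := by
    have h2' : (∫ y in (c : ℝ)..1, min (y - c) 0) = ∫ _ in (c : ℝ)..1, (0 : ℝ) := by
      apply intervalIntegral.integral_congr
      intro y hy
      rw [Set.uIcc_of_le hc1] at hy
      exact min_eq_right (sub_nonneg.2 hy.1)
    simp [h2']
  have h3 : (∫ y in (0 : ℝ)..c, (y - c)) = -(c ^ 2 / 2) := by
    rw [intervalIntegral.integral_sub (continuous_id'.intervalIntegrable 0 c)
      (intervalIntegrable_const), integral_id,
      intervalIntegral.integral_const]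
    simp [smul_eq_mul]
    ring
  rw [← hsplit, h1, h2, h3, add_zero]

/-- **The arithmetic self-intersection number `D̄² = 5/3` of the first example
of Section 6.**  With `θ 0 y = 1` and `θ n y = min (y − 2^{−n}) 0` for `n ≥ 1`,
the series of integrals `∑ n, ∫_0^1 θ n` converges, twice its sum equals `5/3`,
and `∫_0^1 θ n = −2^{−2n−1}` for every `n ≥ 1`. -/
theorem stmt12 (θ : ℕ → ℝ → ℝ) (h0 : ∀ y : ℝ, θ 0 y = 1)
    (hn : ∀ n : ℕ, n ≠ 0 → ∀ y : ℝ, θ n y = min (y - (2 : ℝ) ^ (-(n : ℤ))) 0) :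
    Summable (fun n : ℕ => ∫ y in (0 : ℝ)..1, θ n y) ∧
      2 * (∑' n : ℕ, ∫ y in (0 : ℝ)..1, θ n y) = 5 / 3 ∧
      ∀ n : ℕ, n ≠ 0 → (∫ y in (0 : ℝ)..1, θ n y) = -(2 : ℝ) ^ (-2 * (n : ℤ) - 1) := by
  have hval : ∀ n : ℕ, n ≠ 0 →
      (∫ y in (0 : ℝ)..1, θ n y) = -(2 : ℝ) ^ (-2 * (n : ℤ) - 1) := by
    intro n hne
    have hfun : (fun y => θ n y) = fun y => min (y - (2 : ℝ) ^ (-(n : ℤ))) 0 :=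
      funext (hn n hne)
    set c : ℝ := (2 : ℝ) ^ (-(n : ℤ)) with hc
    have hc0 : (0 : ℝ) ≤ c := le_of_lt (zpow_pos (by norm_num) _)
    have hcle : c ≤ 1 := by
      rw [hc]
      have : (2 : ℝ) ^ (-(n : ℤ)) ≤ (2 : ℝ) ^ (0 : ℤ) :=
        zpow_le_zpow_right₀ (by norm_num) (by omega)
      simpa using this
    have := min_integral c hc0 hcle
    rw [show (∫ y in (0 : ℝ)..1, θ n y)
        = ∫ y in (0 : ℝ)..1, min (y - c) 0 by rw [hfun], this]
    have hexp : (-2 * (n : ℤ) - 1) = (-(n : ℤ)) + (-(n : ℤ)) + (-1) := by ring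
    rw [hexp, zpow_add₀ (by norm_num : (2:ℝ) ≠ 0), zpow_add₀ (by norm_num : (2:ℝ) ≠ 0)]
    rw [hc]
    norm_num
    ring
  have hform : ∀ n : ℕ, (∫ y in (0 : ℝ)..1, θ n y)
      = if n = 0 then (1 : ℝ) else -(1/2) * (1/4 : ℝ) ^ n := by
    intro n
    by_cases h : n = 0
    · subst h
      simp only [if_pos rfl]
      rw [show (fun y => θ 0 y) = fun _ : ℝ => (1:ℝ) from funext h0]
      simp
    · rw [if_neg h, hval n h]
      have h4 : ((1/4 : ℝ)) ^ n = (2 : ℝ) ^ (-2 * (n : ℤ)) := by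
        rw [show (-2 * (n : ℤ)) = (-2) * (n : ℤ) by ring, zpow_mul, zpow_natCast]
        norm_num
      rw [h4, show (-2 * (n : ℤ) - 1) = (-2 * (n : ℤ)) + (-1) by ring,
        zpow_add₀ (by norm_num : (2:ℝ) ≠ 0)]
      norm_num
      ring
  have hgeo : Summable (fun n : ℕ => (1/4 : ℝ) ^ n) :=
    summable_geometric_of_lt_one (by norm_num) (by norm_num)
  have hsum : Summable (fun n : ℕ => ∫ y in (0 : ℝ)..1, θ n y) := by
    rw [← summable_nat_add_iff 1]
    apply Summable.congr ((hgeo.mul_left (-(1/2) * (1/4)))) 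
    intro n
    rw [hform (n+1), if_neg (Nat.succ_ne_zero n)]
    ring
  refine ⟨hsum, ?_, hval⟩
  rw [Summable.tsum_eq_zero_add hsum, hform 0, if_pos rfl]
  have : ∑' n : ℕ, (∫ y in (0 : ℝ)..1, θ (n + 1) y)
      = ∑' n : ℕ, (-(1/2) * (1/4)) * (1/4 : ℝ) ^ n := by
    congr 1
    funext n
    rw [hform (n+1), if_neg (Nat.succ_ne_zero n)]
    ring
  rw [this, tsum_mul_left, tsum_geometric_of_lt_one (by norm_num) (by norm_num)]
  norm_num
end

section
/- For every real α < 0 and every real c > 0, the function f : ℝ² → ℝ given by f(y) = min(0, 1 − c·(1 − ‖y‖)^α) is concave on the open Euclidean unit ball {y ∈ ℝ² : ‖y‖ < 1}, where (1−‖y‖)^α denotes the real power and ‖·‖ is the Euclidean norm. -/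
open Set Real

lemma convexOn_rpow_neg {α : ℝ} (hα : α ≤ 0) :
    ConvexOn ℝ (Set.Ioi (0:ℝ)) (fun x : ℝ => x ^ α) := by
  have hlog : ConvexOn ℝ (Set.Ioi (0:ℝ)) (fun x => α * Real.log x) := by
    have h1 : ConvexOn ℝ (Set.Ioi (0:ℝ)) (fun x => (-α) • (-Real.log x)) :=
      (strictConcaveOn_log_Ioi.concaveOn.neg).smul (by linarith)
    exact h1.congr (fun x _ => by dsimp only; rw [smul_neg, smul_eq_mul]; ring)
  have hcomp : ConvexOn ℝ (Set.Ioi (0:ℝ)) (Real.exp ∘ fun x => α * Real.log x) := by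
    refine ⟨convex_Ioi 0, fun x hx y hy a b ha hb hab => ?_⟩
    calc (Real.exp ∘ fun x => α * Real.log x) (a • x + b • y)
        ≤ Real.exp (a • (α * Real.log x) + b • (α * Real.log y)) :=
          Real.exp_le_exp.2 (hlog.2 hx hy ha hb hab)
      _ ≤ a • Real.exp (α * Real.log x) + b • Real.exp (α * Real.log y) :=
          convexOn_exp.2 trivial trivial ha hb hab
      _ = a • (Real.exp ∘ fun x => α * Real.log x) x
          + b • (Real.exp ∘ fun x => α * Real.log x) y := rfl
  have : ∀ x ∈ Set.Ioi (0:ℝ), (Real.exp ∘ fun x => α * Real.log x) x = x ^ α := by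
    intro x hx
    simp only [Function.comp_apply]
    rw [Real.rpow_def_of_pos hx, mul_comm]
  exact hcomp.congr this

lemma concaveOn_aux (α c : ℝ) (hα : α < 0) (hc : 0 < c) :
    ConcaveOn ℝ (Set.Iio (1:ℝ)) (fun r => min 0 (1 - c * (1 - r) ^ α)) := by
  have haff : ConvexOn ℝ (Set.Iio (1:ℝ)) (fun r : ℝ => (1 - r) ^ α) := by
    have := (convexOn_rpow_neg hα.le).comp_affineMap
      (AffineMap.const ℝ ℝ (1:ℝ) - AffineMap.id ℝ ℝ)
    have hpre : ((AffineMap.const ℝ ℝ (1:ℝ) - AffineMap.id ℝ ℝ) ⁻¹' Set.Ioi 0)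
        = Set.Iio (1:ℝ) := by
      ext x; simp [sub_pos]
    rw [hpre] at this
    exact this
  have hsmul : ConvexOn ℝ (Set.Iio (1:ℝ)) (fun r : ℝ => c * (1 - r) ^ α) := by
    simpa [smul_eq_mul] using haff.smul hc.le
  have h1 : ConcaveOn ℝ (Set.Iio (1:ℝ)) (fun r : ℝ => 1 - c * (1 - r) ^ α) := by
    have := hsmul.neg.add_const (1:ℝ)
    exact this.congr (fun x _ => by simp; ring)
  have h0 : ConcaveOn ℝ (Set.Iio (1:ℝ)) (fun _ : ℝ => (0:ℝ)) :=
    concaveOn_const 0 (convex_Iio 1)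
  simpa [Pi.inf_def] using h0.inf h1

lemma antitone_aux (α c : ℝ) (hα : α < 0) (hc : 0 < c) :
    AntitoneOn (fun r : ℝ => min 0 (1 - c * (1 - r) ^ α)) (Set.Iio (1:ℝ)) := by
  intro r hr s hs hrs
  refine min_le_min le_rfl ?_
  have h1 : (0:ℝ) < 1 - s := by simpa [sub_pos] using hs
  have h2 : (1 - s : ℝ) ≤ 1 - r := by linarith
  have := Real.rpow_le_rpow_of_nonpos h1 h2 hα.le
  nlinarith

/-- **Concavity of the radial roof functions of Example 6.10.**
For `α < 0` and `c > 0`, the function `y ↦ min 0 (1 − c (1 − ‖y‖)^α)` (real power)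
is concave on the open Euclidean unit ball in `ℝ²`. -/
theorem stmt16 (α c : ℝ) (hα : α < 0) (hc : 0 < c) :
    ConcaveOn ℝ (Metric.ball (0 : EuclideanSpace ℝ (Fin 2)) 1)
      (fun y => min 0 (1 - c * (1 - ‖y‖) ^ α)) := by
  have hg := concaveOn_aux α c hα hc
  have hanti := antitone_aux α c hα hc
  refine ⟨convex_ball _ _, ?_⟩
  intro x hx y hy a b ha hb hab
  have hx1 : ‖x‖ ∈ Set.Iio (1:ℝ) := by simpa [mem_ball_zero_iff] using hx
  have hy1 : ‖y‖ ∈ Set.Iio (1:ℝ) := by simpa [mem_ball_zero_iff] using hy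
  have hcomb : a * ‖x‖ + b * ‖y‖ ∈ Set.Iio (1:ℝ) :=
    (convex_Iio (1:ℝ)) hx1 hy1 ha hb hab
  have hnle : ‖a • x + b • y‖ ≤ a * ‖x‖ + b * ‖y‖ := by
    calc ‖a • x + b • y‖ ≤ ‖a • x‖ + ‖b • y‖ := norm_add_le _ _
    _ = a * ‖x‖ + b * ‖y‖ := by
        rw [norm_smul, norm_smul, Real.norm_eq_abs, Real.norm_eq_abs,
          abs_of_nonneg ha, abs_of_nonneg hb]
  have hnmem : ‖a • x + b • y‖ ∈ Set.Iio (1:ℝ) := lt_of_le_of_lt hnle hcomb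
  calc a • min 0 (1 - c * (1 - ‖x‖) ^ α) + b • min 0 (1 - c * (1 - ‖y‖) ^ α)
      ≤ min 0 (1 - c * (1 - (a • ‖x‖ + b • ‖y‖)) ^ α) := hg.2 hx1 hy1 ha hb hab
    _ ≤ min 0 (1 - c * (1 - ‖a • x + b • y‖) ^ α) := by
        have := hanti hnmem (by simpa [smul_eq_mul] using hcomb) (by simpa [smul_eq_mul] using hnle)
        simpa using this
end
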